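/- For every ε ∈ (0,1) there exist δ > 0 and n₀ such that the following holds for all n ≥ n₀. Let H be a 3-graph on n vertices. Then for all but at most εn⁴ touching pairs of edges of H the following holds: writing the touching pair as e = {u,v,x} and f = {u,v,y} (so e ∩ f = {u,v} and the symmetric difference of e and f is {x,y}), there are at least δn² ordered pairs (w,z) of vertices such that x, y, u, v, w, z are six distinct vertices and all eight triples {u,v,x}, {u,v,y}, {v,w,x}, {v,w,y}, {w,z,x}, {w,z,y}, {z,u,x}, {z,u,y} are edges of H. -/

import Mathlib

open scoped Classical
open Finset
namespace S9
variable {V : Type} [Fintype V] [DecidableEq V]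

set_option linter.unusedSectionVars false in
lemma triple_ne {a b c : V} (h : ({a,b,c} : Finset V).card = 3) :
    a ≠ b ∧ a ≠ c ∧ b ≠ c := by
  refine ⟨?_, ?_, ?_⟩ <;> rintro rfl
  · have h1 : ({a,a,c} : Finset V) ⊆ {a,c} := by intro z hz; simp at hz ⊢; tauto
    have := Finset.card_le_card h1
    have h2 := Finset.card_insert_le a ({c} : Finset V)
    simp at h2; omega
  · have h1 : ({a,b,a} : Finset V) ⊆ {a,b} := by intro z hz; simp at hz ⊢; tauto
    have := Finset.card_le_card h1
    have h2 := Finset.card_insert_le a ({b} : Finset V)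
    simp at h2; omega
  · have h1 : ({a,b,b} : Finset V) ⊆ {a,b} := by intro z hz; simp at hz ⊢; tauto
    have := Finset.card_le_card h1
    have h2 := Finset.card_insert_le a ({b} : Finset V)
    simp at h2; omega

def extSet (E : Finset (Finset V)) (x y u v : V) : Finset (V × V) :=
  (Finset.univ ×ˢ Finset.univ : Finset (V × V)).filter fun wz =>
    ([x, y, u, v, wz.1, wz.2] : List V).Pairwise (· ≠ ·) ∧
    ({u, v, x} : Finset V) ∈ E ∧ ({u, v, y} : Finset V) ∈ E ∧
    ({v, wz.1, x} : Finset V) ∈ E ∧ ({v, wz.1, y} : Finset V) ∈ E ∧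
    ({wz.1, wz.2, x} : Finset V) ∈ E ∧ ({wz.1, wz.2, y} : Finset V) ∈ E ∧
    ({wz.2, u, x} : Finset V) ∈ E ∧ ({wz.2, u, y} : Finset V) ∈ E

def Tpred (E : Finset (Finset V)) (δ : ℝ) (n : ℕ) (x y u v : V) : Prop :=
  ({u, v, x} : Finset V) ∈ E ∧ ({u, v, y} : Finset V) ∈ E ∧
  ¬ (δ * n ^ 2 ≤ ((extSet E x y u v).card : ℝ)) ∧
  ¬ (δ * n ^ 2 ≤ ((extSet E x y v u).card : ℝ))

lemma Tpred_symm (E : Finset (Finset V)) (δ : ℝ) (n : ℕ) (x y u v : V) :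
    Tpred E δ n x y u v ↔ Tpred E δ n x y v u := by
  unfold Tpred
  rw [Finset.insert_comm u v ({x} : Finset V), Finset.insert_comm u v ({y} : Finset V)]
  tauto

lemma key (ε : ℝ) (hε0 : 0 < ε) (E : Finset (Finset V)) (n : ℕ)
    (hV : Fintype.card V = n) (hn : (8:ℝ)/ε^3 ≤ (n:ℝ)) (x y : V) (hxy : x ≠ y)
    (hE : ∀ e ∈ E, e.card = 3) :
    (((univ : Finset (V×V)).filter fun uv => Tpred E (ε^3/4) n x y uv.1 uv.2).card : ℝ)
      ≤ ε * n ^ 2 := by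
  set δ : ℝ := ε ^ 3 / 4 with hδ
  set t : V → V → ℝ := fun u v => if Tpred E δ n x y u v then 1 else 0 with ht
  have ht01 : ∀ u v, t u v = 0 ∨ t u v = 1 := by
    intro u v; by_cases h : Tpred E δ n x y u v <;> simp [ht, h]
  have htnn : ∀ u v, 0 ≤ t u v := by
    intro u v; rcases ht01 u v with h | h <;> rw [h] <;> norm_num
  have hsymm : ∀ u v, t u v = t v u := by
    intro u v; simp only [ht]
    by_cases h : Tpred E δ n x y u v
    · rw [if_pos h, if_pos ((Tpred_symm E δ n x y u v).1 h)]
    · rw [if_neg h, if_neg (fun h' => h ((Tpred_symm E δ n x y v u).1 h'))]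
  set d : V → ℝ := fun v => ∑ u, t u v with hd
  set c : V → V → ℝ := fun a b => ∑ v, t a v * t b v with hc
  set m : ℝ := ∑ v, d v with hm
  set W : ℝ := ∑ u, ∑ w, ∑ v, ∑ z, t u v * t v w * (t w z * t z u) with hW
  -- the set we must bound has cardinality m
  have hcard : (((univ : Finset (V×V)).filter fun uv =>
      Tpred E δ n x y uv.1 uv.2).card : ℝ) = m := by
    simp only [hm, hd, ht]
    rw [Finset.card_filter]
    push_cast
    rw [Fintype.sum_prod_type, Finset.sum_comm]
  -- Step A : W = ∑ u w, (c u w)^2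
  have hA : W = ∑ u, ∑ w, (c u w)^2 := by
    refine Finset.sum_congr rfl fun u _ => Finset.sum_congr rfl fun w _ => ?_
    have h1 : ∑ v, ∑ z, t u v * t v w * (t w z * t z u)
        = (∑ v, t u v * t v w) * (∑ z, t w z * t z u) :=
      (Finset.sum_mul_sum _ _ _ _).symm
    have h2 : (∑ v, t u v * t v w) = c u w :=
      Finset.sum_congr rfl fun v _ => by rw [hsymm v w]
    have h3 : (∑ z, t w z * t z u) = c u w :=
      Finset.sum_congr rfl fun z _ => by rw [hsymm z u]; ring
    rw [h1, h2, h3, sq]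
  -- lower bound m^4 ≤ n^4 W
  have hlow : m ^ 4 ≤ (n:ℝ) ^ 4 * W := by
    have hCS1 : m ^ 2 ≤ (n:ℝ) * ∑ v, (d v)^2 := by
      have h := Finset.sum_mul_sq_le_sq_mul_sq (univ : Finset V) (fun _ => (1:ℝ)) d
      simpa [hm, Finset.card_univ, hV] using h
    have hsum_c : ∑ v, (d v)^2 = ∑ u, ∑ w, c u w := by
      have h1 : ∀ v, (d v)^2 = ∑ u, ∑ w, t u v * t w v := by
        intro v
        rw [sq]
        exact Finset.sum_mul_sum _ _ _ _
      rw [Finset.sum_congr rfl fun v _ => h1 v, Finset.sum_comm]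
      exact Finset.sum_congr rfl fun u _ => Finset.sum_comm
    have hCSnn : (0:ℝ) ≤ ∑ v, (d v)^2 := Finset.sum_nonneg fun v _ => sq_nonneg _
    have hCS2 : (∑ u, ∑ w, c u w)^2 ≤ (n:ℝ)^2 * W := by
      rw [hA]
      have h := Finset.sum_mul_sq_le_sq_mul_sq (univ : Finset (V×V)) (fun _ => (1:ℝ))
        (fun p => c p.1 p.2)
      simpa [Fintype.sum_prod_type, Finset.card_univ, hV, sq] using h
    calc m^4 = (m^2)^2 := by ring
      _ ≤ ((n:ℝ) * ∑ v, (d v)^2)^2 := pow_le_pow_left₀ (sq_nonneg m) hCS1 2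
      _ = (n:ℝ)^2 * (∑ u, ∑ w, c u w)^2 := by rw [hsum_c]; ring
      _ ≤ (n:ℝ)^2 * ((n:ℝ)^2 * W) := mul_le_mul_of_nonneg_left hCS2 (sq_nonneg _)
      _ = (n:ℝ)^4 * W := by ring
  -- upper bound W ≤ m * (δ n² + 2n)
  have hle1 : ∀ a b, t a b ≤ 1 := by
    intro a b; rcases ht01 a b with h | h <;> rw [h] <;> norm_num
  have hof1 : ∀ a b, t a b = 1 → Tpred E δ n x y a b := by
    intro a b h
    by_contra hh
    rw [ht] at h
    simp only [hh, if_false] at h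
    norm_num at h
  have hAle : ∀ u v, Tpred E δ n x y u v →
      (∑ w, ∑ z, t v w * (t w z * t z u)) ≤ δ * n^2 + 2 * n := by
    intro u v huv
    have hA1 : (∑ w, ∑ z, t v w * (t w z * t z u))
        = ∑ p : V × V, t v p.1 * (t p.1 p.2 * t p.2 u) := by
      rw [Fintype.sum_prod_type]
    rw [hA1]
    set C : V × V → Prop := fun p => u ≠ p.1 ∧ v ≠ p.2 with hC
    rw [← Finset.sum_filter_add_sum_filter_not univ C]
    have hB1 : (∑ p ∈ univ.filter C, t v p.1 * (t p.1 p.2 * t p.2 u)) ≤ δ * n^2 := by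
      have hstep : ∀ p ∈ univ.filter C, t v p.1 * (t p.1 p.2 * t p.2 u)
          ≤ (if p ∈ extSet E x y u v then (1:ℝ) else 0) := by
        intro p hp
        rw [Finset.mem_filter] at hp
        obtain ⟨-, huw, hvz⟩ := hp
        by_cases hmem : p ∈ extSet E x y u v
        · rw [if_pos hmem]
          calc t v p.1 * (t p.1 p.2 * t p.2 u) ≤ 1 * (1 * 1) := by
                refine mul_le_mul (hle1 _ _) ?_ ?_ (by norm_num)
                · exact mul_le_mul (hle1 _ _) (hle1 _ _) (htnn _ _) (by norm_num)
                · exact mul_nonneg (htnn _ _) (htnn _ _)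
            _ = 1 := by norm_num
        · rw [if_neg hmem]
          rcases ht01 v p.1 with h1 | h1
          · rw [h1]; norm_num
          rcases ht01 p.1 p.2 with h2 | h2
          · rw [h2]; norm_num
          rcases ht01 p.2 u with h3 | h3
          · rw [h3]; norm_num
          exfalso
          apply hmem
          have T1 := hof1 _ _ h1
          have T2 := hof1 _ _ h2
          have T3 := hof1 _ _ h3
          obtain ⟨e1, e2, -, -⟩ := huv
          obtain ⟨e3, e4, -, -⟩ := T1
          obtain ⟨e5, e6, -, -⟩ := T2
          obtain ⟨e7, e8, -, -⟩ := T3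
          obtain ⟨huv', hux, hvx⟩ := triple_ne (hE _ e1)
          obtain ⟨-, huy, hvy⟩ := triple_ne (hE _ e2)
          obtain ⟨hvw, -, hwx⟩ := triple_ne (hE _ e3)
          obtain ⟨-, -, hwy⟩ := triple_ne (hE _ e4)
          obtain ⟨hwz, -, hzx⟩ := triple_ne (hE _ e5)
          obtain ⟨-, -, hzy⟩ := triple_ne (hE _ e6)
          obtain ⟨hzu, -, -⟩ := triple_ne (hE _ e7)
          rw [extSet, Finset.mem_filter]
          refine ⟨by simp [Finset.mem_product], ?_, e1, e2, e3, e4, e5, e6, e7, e8⟩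
          refine List.Pairwise.cons ?_ (List.Pairwise.cons ?_ (List.Pairwise.cons ?_
            (List.Pairwise.cons ?_ (List.Pairwise.cons ?_ (by simp)))))
          · intro a ha
            simp only [List.mem_cons, List.not_mem_nil, or_false] at ha
            rcases ha with rfl | rfl | rfl | rfl | rfl
            exacts [hxy, hux.symm, hvx.symm, hwx.symm, hzx.symm]
          · intro a ha
            simp only [List.mem_cons, List.not_mem_nil, or_false] at ha
            rcases ha with rfl | rfl | rfl | rfl
            exacts [huy.symm, hvy.symm, hwy.symm, hzy.symm]
          · intro a ha
            simp only [List.mem_cons, List.not_mem_nil, or_false] at ha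
            rcases ha with rfl | rfl | rfl
            exacts [huv', huw, Ne.symm hzu]
          · intro a ha
            simp only [List.mem_cons, List.not_mem_nil, or_false] at ha
            rcases ha with rfl | rfl
            exacts [hvw, hvz]
          · intro a ha
            simp only [List.mem_cons, List.not_mem_nil, or_false] at ha
            rcases ha with rfl
            exact hwz
      calc (∑ p ∈ univ.filter C, t v p.1 * (t p.1 p.2 * t p.2 u))
          ≤ ∑ p ∈ univ.filter C, (if p ∈ extSet E x y u v then (1:ℝ) else 0) :=
            Finset.sum_le_sum hstep
        _ ≤ ∑ p : V × V, (if p ∈ extSet E x y u v then (1:ℝ) else 0) := by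
            refine Finset.sum_le_sum_of_subset_of_nonneg (Finset.filter_subset _ _) ?_
            intro p _ _
            split <;> norm_num
        _ = ((extSet E x y u v).card : ℝ) := by
            rw [Finset.sum_ite_mem, Finset.univ_inter, Finset.sum_const]
            simp
        _ ≤ δ * n^2 := by
            obtain ⟨-, -, hfew, -⟩ := huv
            exact le_of_lt (lt_of_not_ge hfew)
    have hB2 : (∑ p ∈ univ.filter (fun p => ¬ C p), t v p.1 * (t p.1 p.2 * t p.2 u))
        ≤ 2 * n := by
      have hone : ∀ p ∈ univ.filter (fun p => ¬ C p),
          t v p.1 * (t p.1 p.2 * t p.2 u) ≤ 1 := by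
        intro p _
        calc t v p.1 * (t p.1 p.2 * t p.2 u) ≤ 1 * (1 * 1) := by
              refine mul_le_mul (hle1 _ _) ?_ ?_ (by norm_num)
              · exact mul_le_mul (hle1 _ _) (hle1 _ _) (htnn _ _) (by norm_num)
              · exact mul_nonneg (htnn _ _) (htnn _ _)
          _ = 1 := by norm_num
      have hcard2 : ((univ.filter (fun p => ¬ C p)).card : ℝ) ≤ 2 * n := by
        have hsub : (univ.filter (fun p : V × V => ¬ C p)) ⊆
            (univ.filter fun p : V × V => u = p.1) ∪ (univ.filter fun p : V × V => v = p.2) := by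
          intro p hp
          simp only [hC, Finset.mem_filter, Finset.mem_univ, true_and, not_and_or, not_not,
            Finset.mem_union] at hp ⊢
          tauto
        have h1n : (univ.filter fun p : V × V => u = p.1).card ≤ n := by
          have := Finset.card_le_card_of_injOn (fun p : V × V => p.2)
            (s := univ.filter fun p : V × V => u = p.1) (t := univ)
            (fun a _ => Finset.mem_univ _)
            (by
              intro p hp q hq hpq
              simp only [Finset.coe_filter, Set.mem_setOf_eq] at hp hq
              exact Prod.ext (hp.2.symm.trans hq.2) hpq)
          rwa [Finset.card_univ, hV] at this
        have h2n : (univ.filter fun p : V × V => v = p.2).card ≤ n := by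
          have := Finset.card_le_card_of_injOn (fun p : V × V => p.1)
            (s := univ.filter fun p : V × V => v = p.2) (t := univ)
            (fun a _ => Finset.mem_univ _)
            (by
              intro p hp q hq hpq
              simp only [Finset.coe_filter, Set.mem_setOf_eq] at hp hq
              exact Prod.ext hpq (hp.2.symm.trans hq.2))
          rwa [Finset.card_univ, hV] at this
        have := le_trans (Finset.card_le_card hsub) (Finset.card_union_le _ _)
        have hcast : ((univ.filter (fun p : V × V => ¬ C p)).card : ℝ)
            ≤ ((univ.filter fun p : V × V => u = p.1).card : ℝ)
              + ((univ.filter fun p : V × V => v = p.2).card : ℝ) := by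
          exact_mod_cast this
        have h1n' : ((univ.filter fun p : V × V => u = p.1).card : ℝ) ≤ n := by exact_mod_cast h1n
        have h2n' : ((univ.filter fun p : V × V => v = p.2).card : ℝ) ≤ n := by exact_mod_cast h2n
        linarith
      calc (∑ p ∈ univ.filter (fun p => ¬ C p), t v p.1 * (t p.1 p.2 * t p.2 u))
          ≤ ∑ _p ∈ univ.filter (fun p => ¬ C p), (1:ℝ) := Finset.sum_le_sum hone
        _ = ((univ.filter (fun p => ¬ C p)).card : ℝ) := by rw [Finset.sum_const]; simp
        _ ≤ 2 * n := hcard2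
    linarith
  have hup : W ≤ m * (δ * n^2 + 2 * n) := by
    have hW2 : W = ∑ u, ∑ v, t u v * (∑ w, ∑ z, t v w * (t w z * t z u)) := by
      refine Finset.sum_congr rfl fun u _ => ?_
      rw [Finset.sum_comm]
      refine Finset.sum_congr rfl fun v _ => ?_
      rw [Finset.mul_sum]
      refine Finset.sum_congr rfl fun w _ => ?_
      rw [Finset.mul_sum]
      exact Finset.sum_congr rfl fun z _ => by ring
    rw [hW2]
    have hKnn : (0:ℝ) ≤ δ * n^2 + 2 * n := by positivity
    calc (∑ u, ∑ v, t u v * (∑ w, ∑ z, t v w * (t w z * t z u)))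
        ≤ ∑ u, ∑ v, t u v * (δ * n^2 + 2 * n) := by
          refine Finset.sum_le_sum fun u _ => Finset.sum_le_sum fun v _ => ?_
          by_cases h : Tpred E δ n x y u v
          · exact mul_le_mul_of_nonneg_left (hAle u v h) (htnn u v)
          · have h0 : t u v = 0 := by rw [ht]; simp [h]
            rw [h0, zero_mul, zero_mul]
      _ = m * (δ * n^2 + 2 * n) := by
          have hstep : ∑ u, ∑ v, t u v * (δ * n^2 + 2 * n)
              = (∑ u, ∑ v, t u v) * (δ * n^2 + 2 * n) := by
            rw [Finset.sum_mul]
            exact Finset.sum_congr rfl fun u _ => by rw [Finset.sum_mul]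
          rw [hstep]
          congr 1
          simp only [hm, hd]
          exact Finset.sum_comm
  -- finish
  rw [hcard]
  have hε3 : (0:ℝ) < 8 / ε^3 := by positivity
  have hnpos : (0:ℝ) < n := lt_of_lt_of_le hε3 hn
  have hm0 : 0 ≤ m := by
    rw [← hcard]
    exact Nat.cast_nonneg _
  rcases eq_or_lt_of_le hm0 with h0 | hpos
  · rw [← h0]; positivity
  · have hmain : m ^ 4 ≤ m * ((n:ℝ)^4 * (δ * n^2 + 2 * n)) := by
      calc m ^ 4 ≤ (n:ℝ)^4 * W := hlow
        _ ≤ (n:ℝ)^4 * (m * (δ * n^2 + 2 * n)) :=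
            mul_le_mul_of_nonneg_left hup (by positivity)
        _ = m * ((n:ℝ)^4 * (δ * n^2 + 2 * n)) := by ring
    have h3 : m ^ 3 ≤ (n:ℝ)^4 * (δ * n^2 + 2 * n) := by
      have := (mul_le_mul_iff_right₀ hpos).mp (by calc m * m^3 = m^4 := by ring
        _ ≤ m * ((n:ℝ)^4 * (δ * n^2 + 2 * n)) := hmain)
      exact this
    have h8 : 8 ≤ ε^3 * n := by
      rw [div_le_iff₀ (by positivity)] at hn
      linarith
    have h4 : (n:ℝ)^4 * (δ * n^2 + 2 * n) ≤ (ε * n^2)^3 := by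
      have hmul := mul_le_mul_of_nonneg_right h8 (show (0:ℝ) ≤ (n:ℝ)^5 / 4 by positivity)
      have hnn : (0:ℝ) ≤ ε^3 * (n:ℝ)^6 := by positivity
      rw [hδ]
      nlinarith [hmul, hnn]
    exact le_of_pow_le_pow_left₀ (by norm_num) (by positivity) (le_trans h3 h4)

end S9

open Finset

/-- for every `ε ∈ (0,1)` there are `δ > 0` and `n₀` such that for every
3-graph `H` on `n ≥ n₀` vertices, all but at most `ε n⁴` touching pairs `(e, f)` of edges,
written `e = {u,v,x}` and `f = {u,v,y}`, admit at least `δ n²` ordered pairs `(w,z)` such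
that `x, y, u, v, w, z` are six distinct vertices and all eight triples of the double pyramid
with apexes `x, y` over the 4-cycle `u, v, w, z` are edges of `H`. -/
theorem statement9 (ε : ℝ) (hε0 : 0 < ε) (hε1 : ε < 1) :
    ∃ δ : ℝ, 0 < δ ∧ ∃ n₀ : ℕ, ∀ n : ℕ, n₀ ≤ n →
      ∀ (V : Type) [Fintype V] [DecidableEq V], Fintype.card V = n →
        ∀ E : Finset (Finset V), (∀ e ∈ E, e.card = 3) →
          (((E ×ˢ E).filter fun p =>
              (p.1 ∩ p.2).card = 2 ∧
              ¬ ∃ u v x y : V, p.1 = {u, v, x} ∧ p.2 = {u, v, y} ∧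
                δ * n ^ 2 ≤
                  (((Finset.univ ×ˢ Finset.univ : Finset (V × V)).filter fun wz =>
                    ([x, y, u, v, wz.1, wz.2] : List V).Pairwise (· ≠ ·) ∧
                    ({u, v, x} : Finset V) ∈ E ∧ ({u, v, y} : Finset V) ∈ E ∧
                    ({v, wz.1, x} : Finset V) ∈ E ∧ ({v, wz.1, y} : Finset V) ∈ E ∧
                    ({wz.1, wz.2, x} : Finset V) ∈ E ∧ ({wz.1, wz.2, y} : Finset V) ∈ E ∧
                    ({wz.2, u, x} : Finset V) ∈ E ∧
                    ({wz.2, u, y} : Finset V) ∈ E).card : ℝ)).card : ℝ)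
            ≤ ε * n ^ 4 := by
  refine ⟨ε^3/4, by positivity, ⌈(8:ℝ)/ε^3⌉₊, ?_⟩
  intro n hn V _ _ hV E hE
  have hn8 : (8:ℝ)/ε^3 ≤ (n:ℝ) := le_trans (Nat.le_ceil _) (by exact_mod_cast hn)
  suffices h : (((E ×ˢ E).filter fun p =>
      (p.1 ∩ p.2).card = 2 ∧
      ¬ ∃ u v x y : V, p.1 = {u, v, x} ∧ p.2 = {u, v, y} ∧
        (ε^3/4) * n ^ 2 ≤ ((S9.extSet E x y u v).card : ℝ)).card : ℝ) ≤ ε * n ^ 4 by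
    exact h
  set δ : ℝ := ε^3/4 with hδ
  set T' : Finset (V×V×V×V) := univ.filter (fun q =>
    q.1 ≠ q.2.1 ∧ S9.Tpred E δ n q.1 q.2.1 q.2.2.1 q.2.2.2) with hT'
  set g : V×V×V×V → Finset V × Finset V :=
    fun q => ({q.2.2.1, q.2.2.2, q.1}, {q.2.2.1, q.2.2.2, q.2.1}) with hg
  have hsub : ((E ×ˢ E).filter fun p =>
      (p.1 ∩ p.2).card = 2 ∧
      ¬ ∃ u v x y : V, p.1 = {u, v, x} ∧ p.2 = {u, v, y} ∧
        δ * n ^ 2 ≤ ((S9.extSet E x y u v).card : ℝ)) ⊆ T'.image g := by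
    intro p hp
    rw [Finset.mem_filter] at hp
    obtain ⟨hpE, hcap, hne⟩ := hp
    rw [Finset.mem_product] at hpE
    obtain ⟨he, hf⟩ := hpE
    push_neg at hne
    have he3 := hE _ he
    have hf3 := hE _ hf
    have hd1 : (p.1 \ p.2).card = 1 := by
      have := Finset.card_sdiff_add_card_inter p.1 p.2
      omega
    have hd2 : (p.2 \ p.1).card = 1 := by
      have := Finset.card_sdiff_add_card_inter p.2 p.1
      rw [Finset.inter_comm] at this
      omega
    obtain ⟨x, hxe⟩ := Finset.card_eq_one.mp hd1
    obtain ⟨y, hye⟩ := Finset.card_eq_one.mp hd2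
    obtain ⟨u, v, huvne, huv⟩ := Finset.card_eq_two.mp hcap
    have he' : p.1 = {u, v, x} := by
      have h1 : p.1 = (p.1 \ p.2) ∪ (p.1 ∩ p.2) := (Finset.sdiff_union_inter _ _).symm
      rw [h1, huv, hxe]
      ext a
      simp only [Finset.mem_union, Finset.mem_singleton, Finset.mem_insert]
      tauto
    have hf' : p.2 = {u, v, y} := by
      have h1 : p.2 = (p.2 \ p.1) ∪ (p.2 ∩ p.1) := (Finset.sdiff_union_inter _ _).symm
      rw [h1, Finset.inter_comm, huv, hye]
      ext a
      simp only [Finset.mem_union, Finset.mem_singleton, Finset.mem_insert]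
      tauto
    have hxy : x ≠ y := by
      have hx : x ∈ p.1 \ p.2 := hxe ▸ Finset.mem_singleton_self x
      have hy : y ∈ p.2 \ p.1 := hye ▸ Finset.mem_singleton_self y
      rw [Finset.mem_sdiff] at hx hy
      rintro rfl
      exact hx.2 hy.1
    refine Finset.mem_image.2 ⟨(x, y, u, v), ?_, ?_⟩
    · rw [hT', Finset.mem_filter]
      refine ⟨Finset.mem_univ _, hxy, ?_, ?_, ?_, ?_⟩
      · rw [← he']; exact he
      · rw [← hf']; exact hf
      · exact not_le.mpr (hne u v x y he' hf')
      · have he'' : p.1 = {v, u, x} := by rw [he', Finset.insert_comm]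
        have hf'' : p.2 = {v, u, y} := by rw [hf', Finset.insert_comm]
        exact not_le.mpr (hne v u x y he'' hf'')
    · exact Prod.ext he'.symm hf'.symm
  have hcard1 : (((E ×ˢ E).filter fun p =>
      (p.1 ∩ p.2).card = 2 ∧
      ¬ ∃ u v x y : V, p.1 = {u, v, x} ∧ p.2 = {u, v, y} ∧
        δ * n ^ 2 ≤ ((S9.extSet E x y u v).card : ℝ)).card : ℝ) ≤ (T'.card : ℝ) := by
    have h1 := Finset.card_le_card hsub
    have h2 := Finset.card_image_le (s := T') (f := g)
    exact_mod_cast le_trans h1 h2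
  refine le_trans hcard1 ?_
  -- fiberwise bound
  have hfib := Finset.card_eq_sum_card_fiberwise
    (f := fun q : V×V×V×V => (q.1, q.2.1)) (s := T') (t := (univ : Finset (V×V)))
    (fun q _ => Finset.mem_univ _)
  have hfb : ∀ p : V × V,
      ((T'.filter fun q => (q.1, q.2.1) = p).card : ℝ) ≤ ε * n ^ 2 := by
    intro p
    by_cases hxy : p.1 = p.2
    · have : (T'.filter fun q => (q.1, q.2.1) = p) = ∅ := by
        rw [Finset.eq_empty_iff_forall_notMem]
        intro q hq
        rw [Finset.mem_filter, hT', Finset.mem_filter] at hq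
        obtain ⟨⟨-, hne', -⟩, hqp⟩ := hq
        apply hne'
        have h1 : q.1 = p.1 := congrArg Prod.fst hqp
        have h2 : q.2.1 = p.2 := congrArg Prod.snd hqp
        rw [h1, h2, hxy]
      rw [this]
      simp only [Finset.card_empty, Nat.cast_zero]
      positivity
    · refine le_trans ?_ (S9.key ε hε0 E n hV hn8 p.1 p.2 hxy hE)
      have hinj : (T'.filter fun q => (q.1, q.2.1) = p).card ≤
          ((univ : Finset (V×V)).filter fun uv =>
            S9.Tpred E (ε^3/4) n p.1 p.2 uv.1 uv.2).card := by
        refine Finset.card_le_card_of_injOn (fun q => (q.2.2.1, q.2.2.2)) ?_ ?_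
        · intro q hq
          rw [Finset.mem_coe, Finset.mem_filter, hT', Finset.mem_filter] at hq
          obtain ⟨⟨-, -, hq2⟩, hqp⟩ := hq
          rw [Finset.mem_coe, Finset.mem_filter]
          refine ⟨Finset.mem_univ _, ?_⟩
          have h1 : q.1 = p.1 := congrArg Prod.fst hqp
          have h2 : q.2.1 = p.2 := congrArg Prod.snd hqp
          rw [← h1, ← h2]
          exact hq2
        · intro q hq q' hq' hqq
          simp only [Finset.coe_filter, Set.mem_setOf_eq] at hq hq'
          have h1 : q.1 = p.1 := congrArg Prod.fst hq.2
          have h2 : q.2.1 = p.2 := congrArg Prod.snd hq.2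
          have h1' : q'.1 = p.1 := congrArg Prod.fst hq'.2
          have h2' : q'.2.1 = p.2 := congrArg Prod.snd hq'.2
          have h3 : q.2.2.1 = q'.2.2.1 := congrArg Prod.fst hqq
          have h4 : q.2.2.2 = q'.2.2.2 := congrArg Prod.snd hqq
          exact Prod.ext (h1.trans h1'.symm)
            (Prod.ext (h2.trans h2'.symm) (Prod.ext h3 h4))
      exact_mod_cast hinj
  have hT'card : (T'.card : ℝ) ≤ (Fintype.card (V × V) : ℝ) * (ε * n ^ 2) := by
    rw [hfib]
    push_cast
    refine le_trans (Finset.sum_le_sum fun p _ => hfb p) ?_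
    rw [Finset.sum_const, Finset.card_univ, nsmul_eq_mul]
  refine le_trans hT'card ?_
  rw [Fintype.card_prod, hV]
  push_cast
  ring_nf
  exact le_refl _
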